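/- The inequality θ̲·δB̲·z⁺ + θ̲·δB̄·z⁻ + δB̲·θ − δp ≤ θ̲·δB̲ is valid on P₀ ∪ P₁ ∪ P₂, and hence on conv(P₀ ∪ P₁ ∪ P₂). -/
import Mathlib


abbrev Pt := ℝ × ℝ × ℝ × ℝ × ℝ

def P0 (tl tu : ℝ) : Set Pt :=
  {p | p.1 = 0 ∧ p.2.1 = 0 ∧ p.2.2.1 = 0 ∧ p.2.2.2.2 = 0 ∧ tl ≤ p.2.2.2.1 ∧ p.2.2.2.1 ≤ tu}

def P1 (tu bl bu : ℝ) : Set Pt :=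
  {p | p.1 = 1 ∧ p.2.1 = 1 ∧ p.2.2.1 = 0 ∧ 0 ≤ p.2.2.2.1 ∧ p.2.2.2.1 ≤ tu ∧
    bl * p.2.2.2.1 ≤ p.2.2.2.2 ∧ p.2.2.2.2 ≤ bu * p.2.2.2.1}

def P2 (tl bl bu : ℝ) : Set Pt :=
  {p | p.1 = 1 ∧ p.2.1 = 0 ∧ p.2.2.1 = 1 ∧ tl ≤ p.2.2.2.1 ∧ p.2.2.2.1 ≤ 0 ∧
    bu * p.2.2.2.1 ≤ p.2.2.2.2 ∧ p.2.2.2.2 ≤ bl * p.2.2.2.1}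

theorem stmt_10 (tl tu bl bu : ℝ) (h1 : tl < 0) (h2 : 0 < tu) (h3 : bl < 0) (h4 : 0 < bu) :
    (∀ p ∈ P0 tl tu ∪ P1 tu bl bu ∪ P2 tl bl bu,
      tl * bl * p.2.1 + tl * bu * p.2.2.1 + bl * p.2.2.2.1 - p.2.2.2.2 ≤ tl * bl) ∧
    (∀ p ∈ convexHull ℝ (P0 tl tu ∪ P1 tu bl bu ∪ P2 tl bl bu),
      tl * bl * p.2.1 + tl * bu * p.2.2.1 + bl * p.2.2.2.1 - p.2.2.2.2 ≤ tl * bl) := by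
  set S : Set Pt := {p | tl * bl * p.2.1 + tl * bu * p.2.2.1 + bl * p.2.2.2.1 - p.2.2.2.2 ≤ tl * bl}
  have hconv : Convex ℝ S := by
    intro x hx y hy a b ha hb hab
    simp only [S, Set.mem_setOf_eq, Prod.smul_fst, Prod.smul_snd, Prod.fst_add, Prod.snd_add,
      smul_eq_mul] at *
    have habm : a * (tl * bl) + b * (tl * bl) = tl * bl := by
      rw [← add_mul, hab, one_mul]
    nlinarith [mul_nonneg ha (sub_nonneg.2 hx), mul_nonneg hb (sub_nonneg.2 hy), habm]
  have hsub : P0 tl tu ∪ P1 tu bl bu ∪ P2 tl bl bu ⊆ S := by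
    rintro p ((⟨e1, e2, e3, e4, h5, h6⟩ | ⟨e1, e2, e3, h5, h6, h7, h8⟩) | ⟨e1, e2, e3, h5, h6, h7, h8⟩) <;>
      simp only [S, Set.mem_setOf_eq] <;> rw [e2, e3] <;> nlinarith
  refine ⟨fun p hp => hsub hp, fun p hp => ?_⟩
  exact convexHull_min hsub hconv hp
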